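/- Let X and Y be countable types, let μ be a probability mass function on X × Y with marginal μ_X(x) = Σ_y μ(x, y), and let f : X → Y. Let p̂ : X → [0,1] be the Bayes confidence: p̂(x) = μ(x, f(x)) / μ_X(x) whenever μ_X(x) > 0 (with arbitrary values in [0,1] where μ_X(x) = 0). Then for every kernel k : X × X → [0,1], every binning function bin, and every x ∈ X: Σ_{(x',y') ∈ X × Y} μ(x', y') · (p̂(x') − 1[f(x')=y']) · k(x, x') · 1[bin(p̂(x')) = bin(p̂(x))] = 0. In particular, the Bayes-optimal confidence function is perfectly locally calibrated: its signed local calibration error vanishes at every point where the corresponding denominator is positive. -/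

import Mathlib

/-- The Bayes-optimal confidence function `p̂(x) = μ(x, f(x)) / μ_X(x)` is
perfectly locally calibrated: for every kernel `k`, binning `bin`, and point
`x`, the (numerator of the) signed local calibration error vanishes; in
particular the signed local calibration error is `0` whenever the
corresponding denominator is positive. -/
theorem stmt_11 {X Y : Type*} [Countable X] [Countable Y] [DecidableEq Y]
    (μ : X × Y → ℝ) (hμ0 : ∀ z : X × Y, 0 ≤ μ z) (hμ1 : (∑' z : X × Y, μ z) = 1)
    (f : X → Y) (p : X → ℝ)
    (hp : ∀ x : X, 0 ≤ p x ∧ p x ≤ 1)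
    (hbayes : ∀ x : X, 0 < (∑' y : Y, μ (x, y)) →
      p x = μ (x, f x) / ∑' y : Y, μ (x, y))
    (m : ℕ) (bin : ℝ → Fin m)
    (k : X → X → ℝ) (hk : ∀ a b : X, 0 ≤ k a b ∧ k a b ≤ 1)
    (x : X) :
    (∑' z : X × Y, μ z * (p z.1 - if f z.1 = z.2 then (1:ℝ) else 0) * k x z.1 *
        (if bin (p z.1) = bin (p x) then (1:ℝ) else 0)) = 0 ∧
      (0 < (∑' z : X × Y, μ z * k x z.1 *
          (if bin (p z.1) = bin (p x) then (1:ℝ) else 0)) →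
        (∑' z : X × Y, μ z * (p z.1 - if f z.1 = z.2 then (1:ℝ) else 0) * k x z.1 *
            (if bin (p z.1) = bin (p x) then (1:ℝ) else 0)) /
          (∑' z : X × Y, μ z * k x z.1 *
            (if bin (p z.1) = bin (p x) then (1:ℝ) else 0)) = 0) := by
  have hμs : Summable μ := by
    by_contra h
    rw [tsum_eq_zero_of_not_summable h] at hμ1
    norm_num at hμ1
  set g : X × Y → ℝ := fun z =>
    μ z * (p z.1 - if f z.1 = z.2 then (1:ℝ) else 0) * k x z.1 *
      (if bin (p z.1) = bin (p x) then (1:ℝ) else 0) with hg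
  have hgb : ∀ z, |g z| ≤ μ z := by
    intro z
    have h1 : |p z.1 - if f z.1 = z.2 then (1:ℝ) else 0| ≤ 1 := by
      rcases (hp z.1) with ⟨h0, h1⟩
      split <;> rw [abs_le] <;> constructor <;> linarith
    have h2 : |k x z.1| ≤ 1 := by
      rcases hk x z.1 with ⟨h0, h1⟩; rw [abs_le]; constructor <;> linarith
    have h3 : |(if bin (p z.1) = bin (p x) then (1:ℝ) else 0)| ≤ 1 := by
      split <;> simp
    have heq : |g z| = |μ z| * |p z.1 - if f z.1 = z.2 then (1:ℝ) else 0| * |k x z.1| *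
        |(if bin (p z.1) = bin (p x) then (1:ℝ) else 0)| := by
      rw [hg]; dsimp only; rw [abs_mul, abs_mul, abs_mul]
    rw [heq]
    have hμz := abs_nonneg (μ z)
    calc |μ z| * |p z.1 - if f z.1 = z.2 then (1:ℝ) else 0| * |k x z.1| *
        |(if bin (p z.1) = bin (p x) then (1:ℝ) else 0)| ≤ |μ z| * 1 * 1 * 1 := by
          gcongr <;> first | exact h1 | exact h2 | exact h3
      _ = μ z := by rw [abs_of_nonneg (hμ0 z)]; ring
  have hgs : Summable g :=
    Summable.of_abs (hμs.of_nonneg_of_le (fun z => abs_nonneg _) hgb)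
  have hkey : ∀ a : X, (∑' y : Y, g (a, y)) = 0 := by
    intro a
    have hμa : Summable (fun y : Y => μ (a, y)) := hμs.prod_factor a
    have hS0 : 0 ≤ ∑' y : Y, μ (a, y) := tsum_nonneg (fun y => hμ0 _)
    have hsum1 : Summable (fun y : Y => μ (a, y) * p a) := hμa.mul_right _
    have hsum2 : Summable (fun y : Y => μ (a, y) * if f a = y then (1:ℝ) else 0) := by
      refine hμa.of_nonneg_of_le (fun y => ?_) (fun y => ?_) <;>
        split <;> nlinarith [hμ0 (a, y)]
    have h2' : (∑' y : Y, μ (a, y) * if f a = y then (1:ℝ) else 0) = μ (a, f a) := by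
      rw [tsum_eq_single (f a) (fun y hy => by simp [Ne.symm hy])]
      simp
    have hinner : (∑' y : Y, μ (a, y) * (p a - if f a = y then (1:ℝ) else 0))
        = (∑' y : Y, μ (a, y)) * p a - μ (a, f a) := by
      have heq : (fun y : Y => μ (a, y) * (p a - if f a = y then (1:ℝ) else 0))
          = fun y => μ (a, y) * p a - μ (a, y) * (if f a = y then (1:ℝ) else 0) := by
        funext y; ring
      rw [heq, Summable.tsum_sub hsum1 hsum2, tsum_mul_right, h2']
    have hz : (∑' y : Y, μ (a, y)) * p a - μ (a, f a) = 0 := by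
      rcases hS0.lt_or_eq with hpos | hzero
      · rw [hbayes a hpos]
        field_simp
        ring
      · have hle : μ (a, f a) ≤ ∑' y : Y, μ (a, y) :=
          Summable.le_tsum hμa (f a) (fun y _ => hμ0 _)
        have hmz : μ (a, f a) = 0 := le_antisymm (hzero ▸ hle) (hμ0 _)
        rw [hmz, ← hzero]; ring
    have heq2 : (fun y : Y => g (a, y)) = fun y =>
        (μ (a, y) * (p a - if f a = y then (1:ℝ) else 0)) *
          (k x a * if bin (p a) = bin (p x) then (1:ℝ) else 0) := by
      funext y; simp only [hg]; ring
    rw [heq2, tsum_mul_right, hinner, hz, zero_mul]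
  have hnum : (∑' z : X × Y, g z) = 0 := by
    rw [Summable.tsum_prod' hgs (fun b => hgs.prod_factor b)]
    simp [hkey]
  exact ⟨hnum, fun _ => by rw [hnum, zero_div]⟩
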